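/- arXiv:2410.11032 — 2 statements merged into one kernel-verified Lean document; each statement's English description precedes it below -/
import Mathlib

section
/- Let A and B be skew-symmetric bilinear forms on a finite-dimensional vector space V over ℂ with core subspace K. Let μ₁, …, μ_D be distinct scalars and v_i ∈ Ker(A + μ_i B) arbitrary vectors. Then the subspace U = K + span{v₁, …, v_D} is isotropic with respect to every form A + λB of the pencil. -/
open Module

variable {V : Type*} [AddCommGroup V] [Module ℂ V]

/-- The rank of a bilinear form. -/
noncomputable def formRank (C : V →ₗ[ℂ] V →ₗ[ℂ] ℂ) : ℕ :=
  finrank ℂ (LinearMap.range C)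

/-- `λ` is a regular value of the pencil `{A + λB}`. -/
def IsRegularValue (A B : V →ₗ[ℂ] V →ₗ[ℂ] ℂ) (lam : ℂ) : Prop :=
  ∀ mu : ℂ, formRank (A + mu • B) ≤ formRank (A + lam • B)

/-- The core subspace: sum of radicals `Ker (A + λB)` over regular `λ`. -/
noncomputable def coreSubspace (A B : V →ₗ[ℂ] V →ₗ[ℂ] ℂ) : Submodule ℂ V :=
  ⨆ (lam : ℂ) (_ : IsRegularValue A B lam), LinearMap.ker (A + lam • B)

-- Key perturbation lemma: if `rank (C + tB) ≤ rank C` for all `t`, then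
-- `B` maps `ker C` into `range C`.
set_option maxRecDepth 8000 in
open LinearMap Polynomial in
lemma key_mem_range {V : Type*} [AddCommGroup V] [Module ℂ V] [FiniteDimensional ℂ V]
    (C B : V →ₗ[ℂ] V →ₗ[ℂ] ℂ)
    (h : ∀ t : ℂ, finrank ℂ (LinearMap.range (C + t • B)) ≤ finrank ℂ (LinearMap.range C))
    (u : V) (hu : C u = 0) : B u ∈ LinearMap.range C := by
  by_contra hBu
  set r := finrank ℂ (LinearMap.range C) with hr
  let b := finBasis ℂ (LinearMap.range C)
  let g : Fin r → (V →ₗ[ℂ] ℂ) := fun i => (b i : V →ₗ[ℂ] ℂ)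
  have h_span : Submodule.span ℂ (Set.range g) = LinearMap.range C := by
    have : Set.range g = (LinearMap.range C).subtype '' Set.range b := by
      rw [← Set.range_comp]; rfl
    rw [this, ← Submodule.map_span, b.span_eq, Submodule.map_subtype_top]
  have h_li_g : LinearIndependent ℂ g :=
    b.linearIndependent.map' (LinearMap.range C).subtype (Submodule.ker_subtype _)
  set y0 : Fin (r + 1) → (V →ₗ[ℂ] ℂ) := Fin.cons (B u) g with hy0
  have h_li : LinearIndependent ℂ y0 :=
    linearIndependent_fin_cons.2 ⟨h_li_g, by rw [h_span]; exact hBu⟩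
  -- preimages of g
  have hxex : ∀ i : Fin r, ∃ x : V, C x = g i := fun i => (b i).2
  choose x hx using hxex
  -- the linear functional picking coordinates
  set S := Submodule.span ℂ (Set.range y0) with hS
  let bS : Basis (Fin (r + 1)) ℂ S := Basis.span h_li
  let φ₀ : S →ₗ[ℂ] (Fin (r + 1) → ℂ) :=
    (Finsupp.linearEquivFunOnFinite ℂ ℂ (Fin (r + 1))).toLinearMap ∘ₗ bS.repr.toLinearMap
  obtain ⟨φ, hφ⟩ := LinearMap.exists_extend φ₀
  have hφy : ∀ j : Fin (r + 1), φ (y0 j) = fun k => if j = k then 1 else 0 := by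
    intro j
    have hmem : y0 j ∈ S := Submodule.subset_span (Set.mem_range_self j)
    have h1 : (⟨y0 j, hmem⟩ : S) = bS j := by
      apply Subtype.ext
      exact congrArg Subtype.val (Basis.span_apply h_li j).symm
    have h2 : φ (y0 j) = φ₀ ⟨y0 j, hmem⟩ := by
      conv_lhs => rw [show y0 j = S.subtype ⟨y0 j, hmem⟩ from rfl]
      rw [← LinearMap.comp_apply, hφ]
    rw [h2, h1]
    ext k
    simp [φ₀, Basis.repr_self, Finsupp.single_apply, Finsupp.linearEquivFunOnFinite_apply]
  -- perturbation directions
  set c : Fin (r + 1) → (V →ₗ[ℂ] ℂ) := Fin.cons 0 (fun i => B (x i)) with hc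
  -- the perturbed vectors
  have hmem : ∀ t : ℂ, t ≠ 0 → ∀ i, y0 i + t • c i ∈ LinearMap.range (C + t • B) := by
    intro t ht i
    refine Fin.cases ?_ (fun i' => ?_) i
    · refine ⟨t⁻¹ • u, ?_⟩
      simp only [y0, c, Fin.cons_zero, smul_zero, add_zero]
      simp [hu, smul_smul, inv_mul_cancel₀ ht]
    · refine ⟨x i', ?_⟩
      simp only [y0, c, Fin.cons_succ]
      simp [hx]
  -- polynomial matrix
  set P : Matrix (Fin (r + 1)) (Fin (r + 1)) ℂ[X] :=
    fun i j => Polynomial.C (φ (y0 i) j) + X * Polynomial.C (φ (c i) j) with hP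
  have hPeval : ∀ t : ℂ, Polynomial.eval t P.det =
      Matrix.det (fun i j => φ (y0 i + t • c i) j) := by
    intro t
    have := RingHom.map_det (Polynomial.evalRingHom t) P
    rw [show (Polynomial.evalRingHom t) P.det = Polynomial.eval t P.det from rfl] at this
    rw [this]
    congr 1
    ext i j
    change Polynomial.evalRingHom t (P i j) = _
    simp only [RingHom.mapMatrix_apply, Matrix.map_apply, hP, Polynomial.eval_add,
      Polynomial.eval_mul, Polynomial.eval_C, Polynomial.eval_X, map_add, map_smul,
      Pi.add_apply, Pi.smul_apply, smul_eq_mul, Matrix.of_apply, coe_evalRingHom]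
  have hP0 : Polynomial.eval 0 P.det = 1 := by
    rw [hPeval 0]
    have : (fun i j => φ (y0 i + (0:ℂ) • c i) j) = (1 : Matrix (Fin (r+1)) (Fin (r+1)) ℂ) := by
      ext i j
      rw [zero_smul, add_zero, hφy i, Matrix.one_apply]
    rw [this, Matrix.det_one]
  have hPne : P.det ≠ 0 := fun h0 => by simp [h0] at hP0
  -- pick a good t
  have hfin : ({t : ℂ | Polynomial.IsRoot P.det t} ∪ {0}).Finite :=
    (Polynomial.finite_setOf_isRoot hPne).union (Set.finite_singleton 0)
  obtain ⟨t, ht⟩ := hfin.infinite_compl.nonempty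
  simp only [Set.mem_compl_iff, Set.mem_union, Set.mem_setOf_eq, Set.mem_singleton_iff,
    not_or] at ht
  obtain ⟨htroot, ht0⟩ := ht
  -- at this t, the r+1 vectors are independent
  have hdet : Matrix.det (fun i j => φ (y0 i + t • c i) j) ≠ 0 := by
    rw [← hPeval]; exact htroot
  have hunit : IsUnit (Matrix.of fun i j => φ (y0 i + t • c i) j) := by
    rw [Matrix.isUnit_iff_isUnit_det]
    exact isUnit_iff_ne_zero.2 hdet
  have hrows : LinearIndependent ℂ (fun i => φ (y0 i + t • c i)) := by
    have := Matrix.linearIndependent_rows_iff_isUnit.2 hunit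
    exact this
  have hli_t : LinearIndependent ℂ (fun i => y0 i + t • c i) :=
    LinearIndependent.of_comp φ hrows
  -- they live in range (C + t • B), which has finrank ≤ r
  set Rt := LinearMap.range (C + t • B) with hRt
  have hli_sub : LinearIndependent ℂ (fun i => (⟨y0 i + t • c i, hmem t ht0 i⟩ : Rt)) := by
    apply LinearIndependent.of_comp Rt.subtype
    exact hli_t
  have hcard := hli_sub.fintype_card_le_finrank
  simp only [Fintype.card_fin] at hcard
  have hle := h t
  rw [← hRt] at hle
  omega

/-- Pairwise orthogonality of pencil radicals: for `x ∈ ker(A+αB)` and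
`y ∈ ker(A+βB)`, if `α ≠ β` or `α` is a regular value, then `x, y` are
orthogonal for both `A` and `B`. -/
lemma pencil_orth {V : Type*} [AddCommGroup V] [Module ℂ V] [FiniteDimensional ℂ V]
    (A B : V →ₗ[ℂ] V →ₗ[ℂ] ℂ)
    (hA : ∀ u v, A u v = - A v u) (hB : ∀ u v, B u v = - B v u)
    {α β : ℂ} (hcase : α ≠ β ∨ IsRegularValue A B α)
    {x y : V} (hx : (A + α • B) x = 0) (hy : (A + β • B) y = 0) :
    A x y = 0 ∧ B x y = 0 := by
  have hx' := LinearMap.congr_fun hx y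
  simp only [LinearMap.add_apply, LinearMap.smul_apply, smul_eq_mul,
    LinearMap.zero_apply] at hx'
  by_cases hab : α = β
  · subst hab
    rcases hcase with hne | hreg
    · exact absurd rfl hne
    · -- regular case: use the key perturbation lemma
      have hrank : ∀ t : ℂ, finrank ℂ (LinearMap.range ((A + α • B) + t • B)) ≤
          finrank ℂ (LinearMap.range (A + α • B)) := by
        intro t
        have hE : (A + α • B) + t • B = A + (α + t) • B := by
          rw [add_smul, add_assoc]
        rw [hE]
        exact hreg (α + t)
      obtain ⟨z, hz⟩ := key_mem_range (A + α • B) B hrank x hx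
      have hz' := LinearMap.congr_fun hz y
      simp only [LinearMap.add_apply, LinearMap.smul_apply, smul_eq_mul] at hz'
      have hy' := LinearMap.congr_fun hy z
      simp only [LinearMap.add_apply, LinearMap.smul_apply, smul_eq_mul,
        LinearMap.zero_apply] at hy'
      have hBxy : B x y = 0 := by
        linear_combination -hz' + hA z y + α * hB z y - hy'
      refine ⟨?_, hBxy⟩
      linear_combination hx' - α * hBxy
  · -- distinct values
    have hy' := LinearMap.congr_fun hy x
    simp only [LinearMap.add_apply, LinearMap.smul_apply, smul_eq_mul,
      LinearMap.zero_apply] at hy'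
    have hBxy : B x y = 0 := by
      have hsub : α - β ≠ 0 := sub_ne_zero.2 hab
      have hmain : (α - β) * B x y = 0 := by
        linear_combination hx' + hy' - hA y x - β * hB y x
      exact (mul_eq_zero.1 hmain).resolve_left hsub
    refine ⟨?_, hBxy⟩
    linear_combination hx' - α * hBxy

/-- Let `A, B` be skew-symmetric bilinear forms on a
finite-dimensional complex vector space with core subspace `K`. For distinct
scalars `μ₁, …, μ_D` and vectors `vᵢ ∈ Ker(A + μᵢB)`, the subspace
`U = K + span{v₁, …, v_D}` is isotropic with respect to every form `A + λB`. -/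
theorem core_plus_radical_vectors_isotropic
    {V : Type*} [AddCommGroup V] [Module ℂ V] [FiniteDimensional ℂ V]
    (A B : V →ₗ[ℂ] V →ₗ[ℂ] ℂ)
    (hA : ∀ u v, A u v = - A v u) (hB : ∀ u v, B u v = - B v u)
    (D : ℕ) (mu : Fin D → ℂ) (hmu : Function.Injective mu)
    (v : Fin D → V) (hv : ∀ i, v i ∈ LinearMap.ker (A + mu i • B)) :
    ∀ (lam : ℂ),
      ∀ u ∈ coreSubspace A B ⊔ Submodule.span ℂ (Set.range v),
      ∀ w ∈ coreSubspace A B ⊔ Submodule.span ℂ (Set.range v),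
        (A + lam • B) u w = 0 := by
  intro lam
  set Φ := A + lam • B with hΦ
  set U := coreSubspace A B ⊔ Submodule.span ℂ (Set.range v) with hU
  have hpair : ∀ (α β : ℂ), (α ≠ β ∨ IsRegularValue A B α) →
      ∀ x ∈ LinearMap.ker (A + α • B), ∀ y ∈ LinearMap.ker (A + β • B), Φ x y = 0 := by
    intro α β hc x hx y hy
    obtain ⟨h1, h2⟩ := pencil_orth A B hA hB hc (LinearMap.mem_ker.1 hx) (LinearMap.mem_ker.1 hy)
    simp only [hΦ, LinearMap.add_apply, LinearMap.smul_apply, smul_eq_mul, h1, h2,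
      mul_zero, add_zero]
  have claim1 : ∀ (α : ℂ), IsRegularValue A B α →
      ∀ x ∈ LinearMap.ker (A + α • B), U ≤ LinearMap.ker (Φ x) := by
    intro α hreg x hx
    rw [hU]
    apply sup_le
    · apply iSup₂_le
      intro β hregβ y hy
      exact LinearMap.mem_ker.2 (hpair α β (Or.inr hreg) x hx y hy)
    · rw [Submodule.span_le]
      rintro _ ⟨i, rfl⟩
      exact LinearMap.mem_ker.2 (hpair α (mu i) (Or.inr hreg) x hx (v i) (hv i))
  have claim2 : ∀ i, U ≤ LinearMap.ker (Φ (v i)) := by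
    intro i
    rw [hU]
    apply sup_le
    · apply iSup₂_le
      intro β hregβ y hy
      have hc : mu i ≠ β ∨ IsRegularValue A B (mu i) := by
        by_cases hb : mu i = β
        · exact Or.inr (hb ▸ hregβ)
        · exact Or.inl hb
      exact LinearMap.mem_ker.2 (hpair (mu i) β hc (v i) (hv i) y hy)
    · rw [Submodule.span_le]
      rintro _ ⟨j, rfl⟩
      by_cases hij : i = j
      · subst hij
        apply LinearMap.mem_ker.2
        have h0 : ∀ z : V, A z z = 0 := fun z => by
          have h := hA z z; linear_combination h / 2
        have h0' : ∀ z : V, B z z = 0 := fun z => by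
          have h := hB z z; linear_combination h / 2
        simp only [hΦ, LinearMap.add_apply, LinearMap.smul_apply, smul_eq_mul,
          h0, h0', mul_zero, add_zero]
      · have hc : mu i ≠ mu j ∨ IsRegularValue A B (mu i) :=
          Or.inl (fun he => hij (hmu he))
        exact LinearMap.mem_ker.2 (hpair (mu i) (mu j) hc (v i) (hv i) (v j) (hv j))
  have hUT : U ≤ ⨅ (w : U), LinearMap.ker (Φ.flip (w : V)) := by
    rw [hU]
    apply sup_le
    · apply iSup₂_le
      intro α hreg x hx
      rw [Submodule.mem_iInf]
      rintro ⟨w, hw⟩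
      rw [LinearMap.mem_ker, LinearMap.flip_apply]
      exact LinearMap.mem_ker.1 (claim1 α hreg x hx hw)
    · rw [Submodule.span_le]
      rintro _ ⟨i, rfl⟩
      rw [SetLike.mem_coe, Submodule.mem_iInf]
      rintro ⟨w, hw⟩
      rw [LinearMap.mem_ker, LinearMap.flip_apply]
      exact LinearMap.mem_ker.1 (claim2 i hw)
  intro u hu w hw
  have := hUT hu
  rw [Submodule.mem_iInf] at this
  have h2 := this ⟨w, hw⟩
  rw [LinearMap.mem_ker, LinearMap.flip_apply] at h2
  exact h2
end

section
/- For a pencil of skew-symmetric bilinear forms {A + λB} on a finite-dimensional complex vector space V with characteristic polynomial p(λ) and core subspace K, one has dim K = dim V − (1/2)·rk(pencil) − deg p, where rk(pencil) is the maximal rank of A + λB over λ. -/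
open Matrix Module

variable {V : Type*} [AddCommGroup V] [Module ℂ V]

/-- Jordan-type upper block: `λ` on the diagonal, `1` on the superdiagonal. -/
def jordanUpper (lam : ℂ) (m : ℕ) : Matrix (Fin m) (Fin m) ℂ :=
  fun i j => if (i : ℕ) = (j : ℕ) then lam else if (i : ℕ) + 1 = (j : ℕ) then 1 else 0

/-- The `2m × 2m` Jordan block of the pencil with eigenvalue `λ`. -/
def jordanBlockA (lam : ℂ) (m : ℕ) :
    Matrix (Fin m ⊕ Fin m) (Fin m ⊕ Fin m) ℂ :=
  Matrix.fromBlocks 0 (jordanUpper lam m) (-(jordanUpper lam m)ᵀ) 0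

/-- The standard symplectic `2m × 2m` block. -/
def jordanBlockB (m : ℕ) : Matrix (Fin m ⊕ Fin m) (Fin m ⊕ Fin m) ℂ :=
  Matrix.fromBlocks 0 (1 : Matrix (Fin m) (Fin m) ℂ) (-1) 0

/-- Upper rectangular part `δ_{ij}` of a Kronecker block for `A`. -/
def kronUpperA (k : ℕ) : Matrix (Fin (k - 1)) (Fin k) ℂ :=
  fun i j => if (i : ℕ) = (j : ℕ) then 1 else 0

/-- Upper rectangular part `δ_{i+1,j}` of a Kronecker block for `B`. -/
def kronUpperB (k : ℕ) : Matrix (Fin (k - 1)) (Fin k) ℂ :=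
  fun i j => if (i : ℕ) + 1 = (j : ℕ) then 1 else 0

/-- The `(2k-1) × (2k-1)` Kronecker block for `A`. -/
def kronBlockA (k : ℕ) :
    Matrix (Fin (k - 1) ⊕ Fin k) (Fin (k - 1) ⊕ Fin k) ℂ :=
  Matrix.fromBlocks 0 (kronUpperA k) (-(kronUpperA k)ᵀ) 0

/-- The `(2k-1) × (2k-1)` Kronecker block for `B`. -/
def kronBlockB (k : ℕ) :
    Matrix (Fin (k - 1) ⊕ Fin k) (Fin (k - 1) ⊕ Fin k) ℂ :=
  Matrix.fromBlocks 0 (kronUpperB k) (-(kronUpperB k)ᵀ) 0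


/-! ### Auxiliary lemmas -/

section AuxJK

open Finset

variable {V : Type*} [AddCommGroup V] [Module ℂ V]

lemma JK.expand_apply {ι : Type*} [Fintype ι] [DecidableEq ι] (C : V →ₗ[ℂ] V →ₗ[ℂ] ℂ)
    (b : Basis ι ℂ V) (x : V) (f : ι) :
    C x (b f) = ∑ e, b.repr x e * (BilinForm.toMatrix b C) e f := by
  conv_lhs => rw [← b.sum_repr x]
  rw [map_sum, LinearMap.sum_apply]
  simp only [map_smul, LinearMap.smul_apply, smul_eq_mul]
  refine Finset.sum_congr rfl fun e _ => ?_
  congr 1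
  exact (BilinForm.toMatrix_apply b C e f).symm

lemma JK.mem_ker_iff' {ι : Type*} [Fintype ι] [DecidableEq ι] (C : V →ₗ[ℂ] V →ₗ[ℂ] ℂ)
    (b : Basis ι ℂ V) (x : V) :
    x ∈ LinearMap.ker C ↔ ∀ f, ∑ e, b.repr x e * (BilinForm.toMatrix b C) e f = 0 := by
  rw [LinearMap.mem_ker]
  constructor
  · intro h f
    rw [← JK.expand_apply, h, LinearMap.zero_apply]
  · intro h
    apply b.ext
    intro f
    rw [JK.expand_apply, h f, LinearMap.zero_apply]

lemma JK.sum_ite_nat {m : ℕ} (g : Fin m → ℂ) (t : ℕ) :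
    ∑ j : Fin m, (if (j : ℕ) = t then g j else 0) = if h : t < m then g ⟨t, h⟩ else 0 := by
  by_cases h : t < m
  · rw [dif_pos h, Finset.sum_eq_single ⟨t, h⟩]
    · simp
    · intro j _ hne
      rw [if_neg]
      intro hc
      exact hne (Fin.ext hc)
    · simp
  · rw [dif_neg h]
    apply Finset.sum_eq_zero
    intro j _
    rw [if_neg]
    omega

lemma JK.jordan_row_sum {m : ℕ} (nu : ℂ) (y : Fin m → ℂ) (j' : Fin m) :
    ∑ j, jordanUpper nu m j' j * y j
      = nu * y j' + (if h : (j' : ℕ) + 1 < m then y ⟨(j' : ℕ) + 1, h⟩ else 0) := by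
  have : ∀ j : Fin m, jordanUpper nu m j' j * y j
      = (if (j : ℕ) = (j' : ℕ) then nu * y j else 0)
        + (if (j : ℕ) = (j' : ℕ) + 1 then y j else 0) := by
    intro j
    unfold jordanUpper
    split_ifs <;> first | (exfalso; omega) | ring
  rw [Finset.sum_congr rfl (fun j _ => this j), Finset.sum_add_distrib,
    JK.sum_ite_nat (fun j => nu * y j), JK.sum_ite_nat y, dif_pos j'.isLt]

lemma JK.jordan_col_sum {m : ℕ} (nu : ℂ) (x : Fin m → ℂ) (j' : Fin m) :
    ∑ j, x j * jordanUpper nu m j j'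
      = nu * x j' + (if h : 0 < (j' : ℕ) then x ⟨(j' : ℕ) - 1, by omega⟩ else 0) := by
  have : ∀ j : Fin m, x j * jordanUpper nu m j j'
      = (if (j : ℕ) = (j' : ℕ) then nu * x j else 0)
        + (if (j : ℕ) = (j' : ℕ) - 1 then (if 0 < (j' : ℕ) then x j else 0) else 0) := by
    intro j
    unfold jordanUpper
    split_ifs <;> first | (exfalso; omega) | ring
  rw [Finset.sum_congr rfl (fun j _ => this j), Finset.sum_add_distrib,
    JK.sum_ite_nat (fun j => nu * x j), JK.sum_ite_nat (fun j => if 0 < (j' : ℕ) then x j else 0),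
    dif_pos j'.isLt]
  simp only [Fin.eta]
  by_cases h : 0 < (j' : ℕ)
  · rw [dif_pos (by omega : (j' : ℕ) - 1 < m), dif_pos h, if_pos h]
  · rw [dif_neg h, dif_pos (by omega : (j' : ℕ) - 1 < m), if_neg h]

lemma JK.kron_row_sum {k : ℕ} (mu : ℂ) (y : Fin k → ℂ) (j' : Fin (k - 1)) :
    ∑ j, (kronUpperA k j' j + mu * kronUpperB k j' j) * y j
      = y ⟨(j' : ℕ), by omega⟩ + mu * y ⟨(j' : ℕ) + 1, by omega⟩ := by
  have : ∀ j : Fin k, (kronUpperA k j' j + mu * kronUpperB k j' j) * y j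
      = (if (j : ℕ) = (j' : ℕ) then y j else 0)
        + (if (j : ℕ) = (j' : ℕ) + 1 then mu * y j else 0) := by
    intro j
    unfold kronUpperA kronUpperB
    split_ifs <;> first | (exfalso; omega) | ring
  rw [Finset.sum_congr rfl (fun j _ => this j), Finset.sum_add_distrib,
    JK.sum_ite_nat y, JK.sum_ite_nat (fun j => mu * y j),
    dif_pos (by omega : (j' : ℕ) < k), dif_pos (by omega : (j' : ℕ) + 1 < k)]

lemma JK.kron_col_sum {k : ℕ} (mu : ℂ) (x : Fin (k - 1) → ℂ) (j' : Fin k) :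
    ∑ j, x j * (kronUpperA k j j' + mu * kronUpperB k j j')
      = (if h : (j' : ℕ) < k - 1 then x ⟨(j' : ℕ), h⟩ else 0)
        + mu * (if h : 0 < (j' : ℕ) ∧ (j' : ℕ) - 1 < k - 1 then x ⟨(j' : ℕ) - 1, h.2⟩ else 0) := by
  have : ∀ j : Fin (k - 1), x j * (kronUpperA k j j' + mu * kronUpperB k j j')
      = (if (j : ℕ) = (j' : ℕ) then x j else 0)
        + (if (j : ℕ) = (j' : ℕ) - 1 then (if 0 < (j' : ℕ) then mu * x j else 0) else 0) := by
    intro j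
    unfold kronUpperA kronUpperB
    split_ifs <;> first | (exfalso; omega) | ring
  rw [Finset.sum_congr rfl (fun j _ => this j), Finset.sum_add_distrib,
    JK.sum_ite_nat x, JK.sum_ite_nat (fun j => if 0 < (j' : ℕ) then mu * x j else 0)]
  congr 1
  by_cases h1 : 0 < (j' : ℕ)
  · by_cases h2 : (j' : ℕ) - 1 < k - 1
    · rw [dif_pos h2, dif_pos ⟨h1, h2⟩, if_pos h1]
    · rw [dif_neg h2, dif_neg (by tauto), mul_zero]
  · by_cases h2 : (j' : ℕ) - 1 < k - 1
    · rw [dif_pos h2, if_neg h1, dif_neg (by tauto), mul_zero]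
    · rw [dif_neg h2, dif_neg (by tauto), mul_zero]

lemma JK.jordan_row_zero {m : ℕ} {nu : ℂ} (hnu : nu ≠ 0) (y : Fin m → ℂ)
    (h : ∀ j', ∑ j, jordanUpper nu m j' j * y j = 0) : ∀ j, y j = 0 := by
  have key : ∀ t : ℕ, ∀ j' : Fin m, m ≤ (j' : ℕ) + 1 + t → y j' = 0 := by
    intro t
    induction t with
    | zero =>
      intro j' hj'
      have := h j'
      rw [JK.jordan_row_sum, dif_neg (by omega)] at this
      rw [add_zero] at this
      exact (mul_eq_zero.mp this).resolve_left hnu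
    | succ t ih =>
      intro j' hj'
      have := h j'
      rw [JK.jordan_row_sum] at this
      by_cases hc : (j' : ℕ) + 1 < m
      · rw [dif_pos hc, ih ⟨(j' : ℕ) + 1, hc⟩ (by simp; omega)] at this
        rw [add_zero] at this
        exact (mul_eq_zero.mp this).resolve_left hnu
      · rw [dif_neg hc] at this
        rw [add_zero] at this
        exact (mul_eq_zero.mp this).resolve_left hnu
  intro j
  exact key m j (by omega)

lemma JK.jordan_col_zero {m : ℕ} {nu : ℂ} (hnu : nu ≠ 0) (x : Fin m → ℂ)
    (h : ∀ j', ∑ j, x j * jordanUpper nu m j j' = 0) : ∀ j, x j = 0 := by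
  have key : ∀ t : ℕ, ∀ j' : Fin m, (j' : ℕ) ≤ t → x j' = 0 := by
    intro t
    induction t with
    | zero =>
      intro j' hj'
      have := h j'
      rw [JK.jordan_col_sum, dif_neg (by omega)] at this
      rw [add_zero] at this
      exact (mul_eq_zero.mp this).resolve_left hnu
    | succ t ih =>
      intro j' hj'
      have := h j'
      rw [JK.jordan_col_sum] at this
      by_cases hc : 0 < (j' : ℕ)
      · rw [dif_pos hc, ih ⟨(j' : ℕ) - 1, by omega⟩ (by simp; omega)] at this
        rw [add_zero] at this
        exact (mul_eq_zero.mp this).resolve_left hnu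
      · rw [dif_neg hc] at this
        rw [add_zero] at this
        exact (mul_eq_zero.mp this).resolve_left hnu
  intro j
  exact key m j (by omega)

lemma JK.kron_col_zero {k : ℕ} {mu : ℂ} (x : Fin (k - 1) → ℂ)
    (h : ∀ j' : Fin k, ∑ j, x j * (kronUpperA k j j' + mu * kronUpperB k j j') = 0) :
    ∀ j, x j = 0 := by
  have key : ∀ t : ℕ, ∀ j : Fin (k - 1), (j : ℕ) ≤ t → x j = 0 := by
    intro t
    induction t with
    | zero =>
      intro j hj
      have hjlt := j.isLt
      have := h ⟨(j : ℕ), by omega⟩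
      rw [JK.kron_col_sum, dif_pos (show (((⟨(j : ℕ), by omega⟩ : Fin k)) : ℕ) < k - 1 by
          simp only [Fin.val_mk]; omega),
        dif_neg (by simp only [Fin.val_mk]; omega)] at this
      simpa using this
    | succ t ih =>
      intro j hj
      have hjlt := j.isLt
      have := h ⟨(j : ℕ), by omega⟩
      rw [JK.kron_col_sum, dif_pos (show (((⟨(j : ℕ), by omega⟩ : Fin k)) : ℕ) < k - 1 by
          simp only [Fin.val_mk]; omega)] at this
      by_cases hc : 0 < (j : ℕ)
      · rw [dif_pos (by simp only [Fin.val_mk]; omega),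
          ih ⟨(j : ℕ) - 1, by omega⟩ (by simp only [Fin.val_mk]; omega)] at this
        simpa using this
      · rw [dif_neg (by simp only [Fin.val_mk]; omega)] at this
        simpa using this
  intro j
  exact key j j le_rfl

lemma JK.kron_row_solve {k : ℕ} (hk : 0 < k) {mu : ℂ} (y : Fin k → ℂ)
    (h : ∀ j' : Fin (k - 1), ∑ j, (kronUpperA k j' j + mu * kronUpperB k j' j) * y j = 0) :
    ∀ j : Fin k, y j = (-mu) ^ (k - 1 - (j : ℕ)) * y ⟨k - 1, by omega⟩ := by
  have key : ∀ t : ℕ, ∀ j : Fin k, k ≤ (j : ℕ) + 1 + t →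
      y j = (-mu) ^ (k - 1 - (j : ℕ)) * y ⟨k - 1, by omega⟩ := by
    intro t
    induction t with
    | zero =>
      intro j hj
      have hv : (j : ℕ) = k - 1 := by omega
      have : j = ⟨k - 1, by omega⟩ := Fin.ext hv
      rw [this]
      simp
    | succ t ih =>
      intro j hj
      by_cases hc : (j : ℕ) + 1 < k
      · by_cases hc' : (j : ℕ) < k - 1
        · have := h ⟨(j : ℕ), hc'⟩
          rw [JK.kron_row_sum] at this
          simp only [Fin.val_mk] at this
          have h2 := ih ⟨(j : ℕ) + 1, hc⟩ (by simp only [Fin.val_mk]; omega)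
          simp only [Fin.val_mk] at h2
          have hje : (⟨(j : ℕ), by omega⟩ : Fin k) = j := by simp
          rw [hje] at this
          rw [h2] at this
          have hexp : k - 1 - (j : ℕ) = (k - 1 - ((j : ℕ) + 1)) + 1 := by omega
          rw [hexp, pow_succ]
          have : y j = -(mu * ((-mu) ^ (k - 1 - ((j : ℕ) + 1)) * y ⟨k - 1, by omega⟩)) := by
            linear_combination this
          rw [this]; ring
        · exfalso; omega
      · have hv : (j : ℕ) = k - 1 := by omega
        have : j = ⟨k - 1, by omega⟩ := Fin.ext hv
        rw [this]
        simp
  intro j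
  exact key k j (by omega)

lemma JK.kron_w_ker {k : ℕ} (mu : ℂ) (j' : Fin (k - 1)) :
    ∑ j : Fin k, (kronUpperA k j' j + mu * kronUpperB k j' j)
      * (-mu) ^ (k - 1 - (j : ℕ)) = 0 := by
  rw [JK.kron_row_sum mu (fun j => (-mu) ^ (k - 1 - (j : ℕ)))]
  simp only [Fin.val_mk]
  have hj := j'.isLt
  have hexp : k - 1 - (j' : ℕ) = (k - 1 - ((j' : ℕ) + 1)) + 1 := by omega
  rw [hexp, pow_succ]
  ring

open Polynomial in
lemma JK.span_w_top (k : ℕ) (S : Set ℂ) (hS : S.Finite) :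
    Submodule.span ℂ {y : Fin k → ℂ | ∃ mu ∉ S, y = fun j : Fin k => (-mu) ^ (k - 1 - (j : ℕ))}
      = ⊤ := by
  by_contra hne
  have hlt : Submodule.span ℂ
      {y : Fin k → ℂ | ∃ mu ∉ S, y = fun j : Fin k => (-mu) ^ (k - 1 - (j : ℕ))} < ⊤ :=
    lt_of_le_of_ne le_top hne
  obtain ⟨φ, hφ0, hφ⟩ := Submodule.exists_dual_map_eq_bot_of_lt_top hlt inferInstance
  have hvan : ∀ mu ∉ S, φ (fun j => (-mu) ^ (k - 1 - (j : ℕ))) = 0 := by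
    intro mu hmu
    have hmem : (fun j : Fin k => (-mu) ^ (k - 1 - (j : ℕ)))
        ∈ Submodule.span ℂ
          {y : Fin k → ℂ | ∃ mu ∉ S, y = fun j : Fin k => (-mu) ^ (k - 1 - (j : ℕ))} :=
      Submodule.subset_span ⟨mu, hmu, rfl⟩
    have := Submodule.mem_map_of_mem (f := φ) hmem
    rw [hφ] at this
    simpa using this
  set p : ℂ[X] := ∑ j : Fin k, C (φ ((Pi.single j 1 : Fin k → ℂ)) * (-1 : ℂ) ^ (k - 1 - (j : ℕ)))
      * X ^ (k - 1 - (j : ℕ)) with hp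
  have heval : ∀ mu ∉ S, p.eval mu = 0 := by
    intro mu hmu
    rw [hp]
    have : (fun j : Fin k => (-mu) ^ (k - 1 - (j : ℕ)))
        = ∑ j : Fin k, ((-mu) ^ (k - 1 - (j : ℕ))) • (Pi.single j 1 : Fin k → ℂ) := by
      ext j'
      simp [Pi.single_apply]
    have h2 := hvan mu hmu
    rw [this, map_sum] at h2
    simp only [_root_.map_smul, smul_eq_mul] at h2
    simp only [eval_finset_sum, eval_mul, eval_C, eval_pow, eval_X]
    rw [← h2]
    apply Finset.sum_congr rfl
    intro j _
    rw [neg_pow mu]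
    ring
  have hpz : p = 0 := by
    apply p.eq_zero_of_infinite_isRoot
    apply Set.Infinite.mono (s := Sᶜ)
    · intro mu hmu
      exact heval mu hmu
    · exact hS.infinite_compl
  have hcoeff : ∀ j : Fin k, φ ((Pi.single j 1 : Fin k → ℂ)) = 0 := by
    intro j
    have h1 : p.coeff (k - 1 - (j : ℕ))
        = φ ((Pi.single j 1 : Fin k → ℂ)) * (-1 : ℂ) ^ (k - 1 - (j : ℕ)) := by
      rw [hp, finset_sum_coeff]
      rw [Finset.sum_eq_single j]
      · rw [coeff_C_mul, coeff_X_pow, if_pos rfl, mul_one]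
      · intro j' _ hne'
        rw [coeff_C_mul, coeff_X_pow, if_neg (by
          intro hc
          apply hne'
          have hj := j.isLt
          have hj' := j'.isLt
          exact Fin.ext (by omega)), mul_zero]
      · simp
    rw [hpz] at h1
    simp only [coeff_zero] at h1
    rcases mul_eq_zero.mp h1.symm with h | h
    · exact h
    · exact absurd h (pow_ne_zero _ (by norm_num))
  apply hφ0
  apply Basis.ext (Pi.basisFun ℂ (Fin k))
  intro j
  simpa using hcoeff j

lemma JK.jordanUpper_add (a mu : ℂ) (m : ℕ) :
    jordanUpper a m + mu • (1 : Matrix (Fin m) (Fin m) ℂ) = jordanUpper (a + mu) m := by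
  ext i j
  by_cases h : (i : ℕ) = (j : ℕ)
  · have : i = j := Fin.ext h
    simp [jordanUpper, this, Matrix.one_apply]
  · have : ¬ i = j := fun hc => h (congrArg _ hc)
    simp [jordanUpper, h, this, Matrix.one_apply]

lemma JK.jordan_block_combine (a mu : ℂ) (m : ℕ) :
    jordanBlockA a m + mu • jordanBlockB m
      = Matrix.fromBlocks 0 (jordanUpper (a + mu) m) (-(jordanUpper (a + mu) m)ᵀ) 0 := by
  rw [jordanBlockA, jordanBlockB, Matrix.fromBlocks_smul, Matrix.fromBlocks_add,
    ← JK.jordanUpper_add a mu m]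
  congr 1 <;>
    (simp [Matrix.transpose_add, Matrix.transpose_smul, Matrix.transpose_one, smul_neg,
      neg_add]; try abel)

lemma JK.kron_block_combine (mu : ℂ) (k : ℕ) :
    kronBlockA k + mu • kronBlockB k
      = Matrix.fromBlocks 0 (kronUpperA k + mu • kronUpperB k)
          (-(kronUpperA k + mu • kronUpperB k)ᵀ) 0 := by
  rw [kronBlockA, kronBlockB, Matrix.fromBlocks_smul, Matrix.fromBlocks_add]
  congr 1 <;>
    (simp [Matrix.transpose_add, Matrix.transpose_smul, smul_neg, neg_add]; try abel)

lemma JK.sum_blockDiagonal' {ι : Type*} [Fintype ι] [DecidableEq ι] {κ : ι → Type*}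
    [∀ i, Fintype (κ i)] [∀ i, DecidableEq (κ i)]
    (D : ∀ i, Matrix (κ i) (κ i) ℂ) (c : (Σ i, κ i) → ℂ) (i' : ι) (j' : κ i') :
    ∑ e : Σ i, κ i, c e * Matrix.blockDiagonal' D e ⟨i', j'⟩
      = ∑ j : κ i', c ⟨i', j⟩ * D i' j j' := by
  rw [← Finset.univ_sigma_univ, Finset.sum_sigma]
  rw [Finset.sum_eq_single i']
  · simp [Matrix.blockDiagonal'_apply_eq]
  · intro i _ hne
    apply Finset.sum_eq_zero
    intro j _
    rw [Matrix.blockDiagonal'_apply_ne _ _ _ hne, mul_zero]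
  · simp

lemma JK.sum_fromBlocks_inl {α β : Type*} [Fintype α] [Fintype β]
    (M₁ : Matrix α α ℂ) (M₂ : Matrix β β ℂ) (c : α ⊕ β → ℂ) (f : α) :
    ∑ e : α ⊕ β, c e * (Matrix.fromBlocks M₁ 0 0 M₂) e (Sum.inl f)
      = ∑ e : α, c (Sum.inl e) * M₁ e f := by
  rw [Fintype.sum_sum_type]; simp

lemma JK.sum_fromBlocks_inr {α β : Type*} [Fintype α] [Fintype β]
    (M₁ : Matrix α α ℂ) (M₂ : Matrix β β ℂ) (c : α ⊕ β → ℂ) (f : β) :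
    ∑ e : α ⊕ β, c e * (Matrix.fromBlocks M₁ 0 0 M₂) e (Sum.inr f)
      = ∑ e : β, c (Sum.inr e) * M₂ e f := by
  rw [Fintype.sum_sum_type]; simp

/-- The combined matrix of the pencil at parameter `mu`. -/
def JK.pencilMat {kJ kK : ℕ} (jsz : Fin kJ → ℕ) (ksz : Fin kK → ℕ) (eig : Fin kJ → ℂ)
    (mu : ℂ) :
    Matrix
      (((i : Fin kJ) × (Fin (jsz i) ⊕ Fin (jsz i))) ⊕
       ((i : Fin kK) × (Fin (ksz i - 1) ⊕ Fin (ksz i))))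
      (((i : Fin kJ) × (Fin (jsz i) ⊕ Fin (jsz i))) ⊕
       ((i : Fin kK) × (Fin (ksz i - 1) ⊕ Fin (ksz i)))) ℂ :=
  Matrix.fromBlocks
    (Matrix.blockDiagonal' (fun i => Matrix.fromBlocks 0 (jordanUpper (eig i + mu) (jsz i))
      (-(jordanUpper (eig i + mu) (jsz i))ᵀ) 0)) 0 0
    (Matrix.blockDiagonal' (fun i => Matrix.fromBlocks 0
      (kronUpperA (ksz i) + mu • kronUpperB (ksz i))
      (-(kronUpperA (ksz i) + mu • kronUpperB (ksz i))ᵀ) 0))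

section Esums

variable {kJ kK : ℕ} {jsz : Fin kJ → ℕ} {ksz : Fin kK → ℕ} (eig : Fin kJ → ℂ) (mu : ℂ)
  (c : ((i : Fin kJ) × (Fin (jsz i) ⊕ Fin (jsz i))) ⊕
       ((i : Fin kK) × (Fin (ksz i - 1) ⊕ Fin (ksz i))) → ℂ)

lemma JK.E1_sum (i' : Fin kJ) (j' : Fin (jsz i')) :
    ∑ e, c e * JK.pencilMat jsz ksz eig mu e (Sum.inl ⟨i', Sum.inl j'⟩)
      = -∑ j, jordanUpper (eig i' + mu) (jsz i') j' j * c (Sum.inl ⟨i', Sum.inr j⟩) := by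
  unfold JK.pencilMat
  rw [JK.sum_fromBlocks_inl, JK.sum_blockDiagonal' _ (fun e => c (Sum.inl e)),
    Fintype.sum_sum_type]
  simp [mul_comm]

lemma JK.E2_sum (i' : Fin kJ) (j' : Fin (jsz i')) :
    ∑ e, c e * JK.pencilMat jsz ksz eig mu e (Sum.inl ⟨i', Sum.inr j'⟩)
      = ∑ j, c (Sum.inl ⟨i', Sum.inl j⟩) * jordanUpper (eig i' + mu) (jsz i') j j' := by
  unfold JK.pencilMat
  rw [JK.sum_fromBlocks_inl, JK.sum_blockDiagonal' _ (fun e => c (Sum.inl e)),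
    Fintype.sum_sum_type]
  simp

lemma JK.E3_sum (i' : Fin kK) (j' : Fin (ksz i' - 1)) :
    ∑ e, c e * JK.pencilMat jsz ksz eig mu e (Sum.inr ⟨i', Sum.inl j'⟩)
      = -∑ j, (kronUpperA (ksz i') j' j + mu * kronUpperB (ksz i') j' j)
          * c (Sum.inr ⟨i', Sum.inr j⟩) := by
  unfold JK.pencilMat
  rw [JK.sum_fromBlocks_inr, JK.sum_blockDiagonal' _ (fun e => c (Sum.inr e)),
    Fintype.sum_sum_type]
  simp only [Matrix.fromBlocks_apply₁₁, Matrix.fromBlocks_apply₂₁, Matrix.fromBlocks_apply₂₂,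
    Matrix.zero_apply, mul_zero, Finset.sum_const_zero, add_zero, zero_add, Matrix.neg_apply,
    Matrix.transpose_apply, Matrix.add_apply, Matrix.smul_apply, smul_eq_mul, neg_add]
  rw [← Finset.sum_neg_distrib]
  apply Finset.sum_congr rfl
  intro j _
  ring

lemma JK.E4_sum (i' : Fin kK) (j' : Fin (ksz i')) :
    ∑ e, c e * JK.pencilMat jsz ksz eig mu e (Sum.inr ⟨i', Sum.inr j'⟩)
      = ∑ j, c (Sum.inr ⟨i', Sum.inl j⟩)
          * (kronUpperA (ksz i') j j' + mu * kronUpperB (ksz i') j j') := by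
  unfold JK.pencilMat
  rw [JK.sum_fromBlocks_inr, JK.sum_blockDiagonal' _ (fun e => c (Sum.inr e)),
    Fintype.sum_sum_type]
  simp

end Esums

lemma JK.indep_of_single {ι : Type*} [Fintype ι] [DecidableEq ι] (w : ι → V)
    (Φ : V →ₗ[ℂ] ι → ℂ) (h : ∀ i, Φ (w i) = Pi.single i 1) : LinearIndependent ℂ w := by
  apply LinearIndependent.of_comp Φ
  have hcomp : ⇑Φ ∘ w = fun i => (Pi.single i 1 : ι → ℂ) := funext fun i => h i
  rw [hcomp]
  have h2 : (fun i : ι => (Pi.single i 1 : ι → ℂ)) = ⇑(Pi.basisFun ℂ ι) :=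
    funext fun i => (Pi.basisFun_apply ℂ ι i).symm
  rw [h2]
  exact (Pi.basisFun ℂ ι).linearIndependent

end AuxJK


/-- Let `(A, B)` be a pencil of skew-symmetric bilinear forms on a
finite-dimensional complex vector space admitting a Jordan–Kronecker
decomposition with Jordan blocks of sizes `2·jsz i` (eigenvalues `eig i`) and
Kronecker blocks of sizes `2·ksz i - 1`. Then
`dim K = dim V − (1/2)·rk(pencil) − deg p`, where
`rk(pencil)/2 = Σ jsz i + Σ (ksz i − 1)` and `deg p = Σ jsz i` is the degree of
the characteristic polynomial `p(λ) = Π (λ − λ_j)^{n_j}`. -/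
theorem dim_core_eq_dim_sub_halfrank_sub_deg
    {V : Type*} [AddCommGroup V] [Module ℂ V] [FiniteDimensional ℂ V]
    (A B : V →ₗ[ℂ] V →ₗ[ℂ] ℂ)
    (kJ kK : ℕ) (jsz : Fin kJ → ℕ) (ksz : Fin kK → ℕ)
    (hjsz : ∀ i, 0 < jsz i) (hksz : ∀ i, 0 < ksz i) (eig : Fin kJ → ℂ)
    (b : Basis (((i : Fin kJ) × (Fin (jsz i) ⊕ Fin (jsz i))) ⊕
                ((i : Fin kK) × (Fin (ksz i - 1) ⊕ Fin (ksz i)))) ℂ V)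
    (hAmat : BilinForm.toMatrix b A
      = Matrix.fromBlocks
          (Matrix.blockDiagonal' (fun i => jordanBlockA (eig i) (jsz i))) 0 0
          (Matrix.blockDiagonal' (fun i => kronBlockA (ksz i))))
    (hBmat : BilinForm.toMatrix b B
      = Matrix.fromBlocks
          (Matrix.blockDiagonal' (fun i => jordanBlockB (jsz i))) 0 0
          (Matrix.blockDiagonal' (fun i => kronBlockB (ksz i)))) :
    (finrank ℂ (coreSubspace A B) : ℤ)
      = (finrank ℂ V : ℤ)
        - ((∑ i, (jsz i : ℤ)) + ∑ i, ((ksz i : ℤ) - 1))   -- = rk(pencil)/2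
        - ∑ i, (jsz i : ℤ) := by                          -- = deg p
  
  classical
  -- the combined matrix of the pencil
  have hM : ∀ mu : ℂ, BilinForm.toMatrix b (A + mu • B) = JK.pencilMat jsz ksz eig mu := by
    intro mu
    have hJ : Matrix.blockDiagonal' (fun i => jordanBlockA (eig i) (jsz i))
        + mu • Matrix.blockDiagonal' (fun i => jordanBlockB (jsz i))
        = Matrix.blockDiagonal' (fun i => Matrix.fromBlocks 0
            (jordanUpper (eig i + mu) (jsz i)) (-(jordanUpper (eig i + mu) (jsz i))ᵀ) 0) := by
      rw [← Matrix.blockDiagonal'_smul, ← Matrix.blockDiagonal'_add]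
      apply congrArg Matrix.blockDiagonal'
      funext i
      show jordanBlockA (eig i) (jsz i) + mu • jordanBlockB (jsz i) = _
      exact JK.jordan_block_combine (eig i) mu (jsz i)
    have hK : Matrix.blockDiagonal' (fun i => kronBlockA (ksz i))
        + mu • Matrix.blockDiagonal' (fun i => kronBlockB (ksz i))
        = Matrix.blockDiagonal' (fun i => Matrix.fromBlocks 0
            (kronUpperA (ksz i) + mu • kronUpperB (ksz i))
            (-(kronUpperA (ksz i) + mu • kronUpperB (ksz i))ᵀ) 0) := by
      rw [← Matrix.blockDiagonal'_smul, ← Matrix.blockDiagonal'_add]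
      apply congrArg Matrix.blockDiagonal'
      funext i
      show kronBlockA (ksz i) + mu • kronBlockB (ksz i) = _
      exact JK.kron_block_combine mu (ksz i)
    rw [map_add, LinearEquiv.map_smul, hAmat, hBmat, Matrix.fromBlocks_smul,
      Matrix.fromBlocks_add, hJ, hK]
    unfold JK.pencilMat
    simp only [smul_zero, add_zero]
  -- kernel criterion
  have hker : ∀ (mu : ℂ) (x : V), x ∈ LinearMap.ker (A + mu • B) ↔
      ∀ f, ∑ e, b.repr x e * JK.pencilMat jsz ksz eig mu e f = 0 := by
    intro mu x
    rw [JK.mem_ker_iff' (A + mu • B) b x, hM mu]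
  -- the four families of equations satisfied by kernel elements
  have heq1 : ∀ (mu : ℂ) (x : V), x ∈ LinearMap.ker (A + mu • B) →
      ∀ (i' : Fin kJ) (j' : Fin (jsz i')),
      ∑ j, jordanUpper (eig i' + mu) (jsz i') j' j * b.repr x (Sum.inl ⟨i', Sum.inr j⟩) = 0 := by
    intro mu x hx i' j'
    exact neg_eq_zero.mp
      ((JK.E1_sum eig mu (fun e => b.repr x e) i' j').symm.trans
        ((hker mu x).mp hx (Sum.inl ⟨i', Sum.inl j'⟩)))
  have heq2 : ∀ (mu : ℂ) (x : V), x ∈ LinearMap.ker (A + mu • B) →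
      ∀ (i' : Fin kJ) (j' : Fin (jsz i')),
      ∑ j, b.repr x (Sum.inl ⟨i', Sum.inl j⟩) * jordanUpper (eig i' + mu) (jsz i') j j' = 0 := by
    intro mu x hx i' j'
    exact (JK.E2_sum eig mu (fun e => b.repr x e) i' j').symm.trans
      ((hker mu x).mp hx (Sum.inl ⟨i', Sum.inr j'⟩))
  have heq3 : ∀ (mu : ℂ) (x : V), x ∈ LinearMap.ker (A + mu • B) →
      ∀ (i' : Fin kK) (j' : Fin (ksz i' - 1)),
      ∑ j, (kronUpperA (ksz i') j' j + mu * kronUpperB (ksz i') j' j)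
        * b.repr x (Sum.inr ⟨i', Sum.inr j⟩) = 0 := by
    intro mu x hx i' j'
    exact neg_eq_zero.mp
      ((JK.E3_sum eig mu (fun e => b.repr x e) i' j').symm.trans
        ((hker mu x).mp hx (Sum.inr ⟨i', Sum.inl j'⟩)))
  have heq4 : ∀ (mu : ℂ) (x : V), x ∈ LinearMap.ker (A + mu • B) →
      ∀ (i' : Fin kK) (j' : Fin (ksz i')),
      ∑ j, b.repr x (Sum.inr ⟨i', Sum.inl j⟩)
        * (kronUpperA (ksz i') j j' + mu * kronUpperB (ksz i') j j') = 0 := by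
    intro mu x hx i' j'
    exact (JK.E4_sum eig mu (fun e => b.repr x e) i' j').symm.trans
      ((hker mu x).mp hx (Sum.inr ⟨i', Sum.inr j'⟩))
  -- the singular set
  set S : Set ℂ := Set.range (fun i : Fin kJ => -eig i) with hS
  have hSfin : S.Finite := Set.finite_range _
  -- matrix entries of the pencil
  have happly : ∀ (mu : ℂ) e f, (A + mu • B) (b e) (b f) = JK.pencilMat jsz ksz eig mu e f := by
    intro mu e f
    rw [← hM mu]
    exact (BilinForm.toMatrix_apply b (A + mu • B) e f).symm
  have hmemker : ∀ (mu : ℂ) (x : V), (∀ f, (A + mu • B) x (b f) = 0) →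
      x ∈ LinearMap.ker (A + mu • B) := by
    intro mu x h
    rw [LinearMap.mem_ker]
    apply b.ext
    intro f
    rw [h f, LinearMap.zero_apply]
  -- the Kronecker kernel vectors
  set v : (i₀ : Fin kK) → ℂ → V := fun i₀ mu =>
    ∑ j : Fin (ksz i₀), ((-mu) ^ (ksz i₀ - 1 - (j : ℕ))) • b (Sum.inr ⟨i₀, Sum.inr j⟩) with hv
  -- coordinates of v
  have hrepr0 : ∀ (i₀ : Fin kK) (mu : ℂ) e, (∀ j : Fin (ksz i₀), e ≠ Sum.inr ⟨i₀, Sum.inr j⟩) →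
      b.repr (v i₀ mu) e = 0 := by
    intro i₀ mu e he
    rw [hv]
    simp only [map_sum, _root_.map_smul, Finsupp.coe_finset_sum, Finset.sum_apply,
      Finsupp.coe_smul, Pi.smul_apply, Basis.repr_self, smul_eq_mul]
    apply Finset.sum_eq_zero
    intro j _
    rw [Finsupp.single_apply, if_neg (fun hc => he j hc.symm), mul_zero]
  have hreprv : ∀ (i₀ : Fin kK) (mu : ℂ) (j' : Fin (ksz i₀)),
      b.repr (v i₀ mu) (Sum.inr ⟨i₀, Sum.inr j'⟩) = (-mu) ^ (ksz i₀ - 1 - (j' : ℕ)) := by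
    intro i₀ mu j'
    rw [hv]
    simp only [map_sum, _root_.map_smul, Finsupp.coe_finset_sum, Finset.sum_apply,
      Finsupp.coe_smul, Pi.smul_apply, Basis.repr_self, smul_eq_mul]
    rw [Finset.sum_eq_single j']
    · rw [Finsupp.single_apply, if_pos rfl, mul_one]
    · intro j _ hne
      rw [Finsupp.single_apply, if_neg, mul_zero]
      intro hc
      apply hne
      simpa using hc
    · simp
  -- v lies in the kernel for every mu
  have hvker : ∀ (i₀ : Fin kK) (mu : ℂ), v i₀ mu ∈ LinearMap.ker (A + mu • B) := by
    intro i₀ mu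
    apply hmemker
    intro f
    rw [hv]
    simp only [map_sum, LinearMap.map_smul₂, LinearMap.sum_apply, LinearMap.smul_apply,
      smul_eq_mul]
    have hterm : ∀ j : Fin (ksz i₀), (A + mu • B) (b (Sum.inr ⟨i₀, Sum.inr j⟩)) (b f)
        = JK.pencilMat jsz ksz eig mu (Sum.inr ⟨i₀, Sum.inr j⟩) f := fun j => happly mu _ f
    rw [Finset.sum_congr rfl (fun j _ => by rw [hterm j])]
    obtain (⟨i', fj⟩ | ⟨i', fk⟩) := f
    · apply Finset.sum_eq_zero
      intro j _
      unfold JK.pencilMat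
      simp
    · obtain (j' | j') := fk
      · by_cases hi : i₀ = i'
        · subst hi
          have hentry : ∀ j : Fin (ksz i₀),
              JK.pencilMat jsz ksz eig mu (Sum.inr ⟨i₀, Sum.inr j⟩) (Sum.inr ⟨i₀, Sum.inl j'⟩)
              = -((kronUpperA (ksz i₀) j' j + mu * kronUpperB (ksz i₀) j' j)) := by
            intro j
            unfold JK.pencilMat
            simp [Matrix.blockDiagonal'_apply_eq]
          rw [Finset.sum_congr rfl (fun j _ => by rw [hentry j])]
          have := JK.kron_w_ker (k := ksz i₀) mu j'
          rw [← neg_eq_zero, ← Finset.sum_neg_distrib] at this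
          rw [← this]
          apply Finset.sum_congr rfl
          intro j _
          ring
        · apply Finset.sum_eq_zero
          intro j _
          unfold JK.pencilMat
          rw [Matrix.fromBlocks_apply₂₂, Matrix.blockDiagonal'_apply_ne _ _ _ hi, mul_zero]
      · apply Finset.sum_eq_zero
        intro j _
        unfold JK.pencilMat
        by_cases hi : i₀ = i'
        · subst hi
          simp [Matrix.blockDiagonal'_apply_eq]
        · rw [Matrix.fromBlocks_apply₂₂, Matrix.blockDiagonal'_apply_ne _ _ _ hi, mul_zero]
  -- independence of the v family
  have hindep : ∀ mu : ℂ, LinearIndependent ℂ (fun i : Fin kK => v i mu) := by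
    intro mu
    apply JK.indep_of_single (fun i : Fin kK => v i mu)
      (LinearMap.pi (fun i : Fin kK =>
        Finsupp.lapply (Sum.inr ⟨i, Sum.inr ⟨ksz i - 1, by have := hksz i; omega⟩⟩) ∘ₗ
          (b.repr : V ≃ₗ[ℂ] _).toLinearMap))
    intro i
    funext i'
    simp only [LinearMap.pi_apply, LinearMap.coe_comp, Function.comp_apply,
      Finsupp.lapply_apply, LinearEquiv.coe_coe]
    by_cases hi : i' = i
    · subst hi
      rw [hreprv i' mu ⟨ksz i' - 1, by have := hksz i'; omega⟩]
      simp
    · rw [hrepr0 i mu _ (by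
        intro j hc
        apply hi
        obtain ⟨h1, -⟩ := Sigma.mk.inj_iff.mp (Sum.inr.inj hc)
        exact h1)]
      rw [Pi.single_eq_of_ne hi]
  -- lower bound on kernel dimension
  have hkerdim_lb : ∀ mu : ℂ, kK ≤ finrank ℂ (LinearMap.ker (A + mu • B)) := by
    intro mu
    have hsp : Submodule.span ℂ (Set.range fun i : Fin kK => v i mu)
        ≤ LinearMap.ker (A + mu • B) := by
      rw [Submodule.span_le]
      rintro _ ⟨i, rfl⟩
      exact hvker i mu
    have hfr : finrank ℂ (Submodule.span ℂ (Set.range fun i : Fin kK => v i mu)) = kK := by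
      rw [finrank_span_eq_card (hindep mu), Fintype.card_fin]
    rw [← hfr]
    exact Submodule.finrank_mono hsp
  -- exact kernel description for regular mu
  have hker_eq_span : ∀ mu ∉ S, LinearMap.ker (A + mu • B)
      = Submodule.span ℂ (Set.range fun i : Fin kK => v i mu) := by
    intro mu hmu
    have hnu : ∀ i : Fin kJ, eig i + mu ≠ 0 := by
      intro i hc
      exact hmu ⟨i, by linear_combination -hc⟩
    apply le_antisymm
    · intro x hx
      have hJy : ∀ (i : Fin kJ) (j : Fin (jsz i)), b.repr x (Sum.inl ⟨i, Sum.inr j⟩) = 0 :=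
        fun i => JK.jordan_row_zero (hnu i) _ (heq1 mu x hx i)
      have hJx : ∀ (i : Fin kJ) (j : Fin (jsz i)), b.repr x (Sum.inl ⟨i, Sum.inl j⟩) = 0 :=
        fun i => JK.jordan_col_zero (hnu i) _ (heq2 mu x hx i)
      have hKx : ∀ (i : Fin kK) (j : Fin (ksz i - 1)), b.repr x (Sum.inr ⟨i, Sum.inl j⟩) = 0 :=
        fun i => JK.kron_col_zero _ (heq4 mu x hx i)
      have hKy : ∀ (i : Fin kK) (j : Fin (ksz i)), b.repr x (Sum.inr ⟨i, Sum.inr j⟩)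
          = (-mu) ^ (ksz i - 1 - (j : ℕ))
            * b.repr x (Sum.inr ⟨i, Sum.inr ⟨ksz i - 1, by have := hksz i; omega⟩⟩) :=
        fun i => JK.kron_row_solve (hksz i) _ (heq3 mu x hx i)
      have hxeq : x = ∑ i : Fin kK,
          b.repr x (Sum.inr ⟨i, Sum.inr ⟨ksz i - 1, by have := hksz i; omega⟩⟩) • v i mu := by
        apply b.ext_elem
        intro e
        rw [map_sum]
        simp only [_root_.map_smul, Finsupp.coe_finset_sum, Finset.sum_apply,
          Finsupp.coe_smul, Pi.smul_apply, smul_eq_mul]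
        obtain (⟨iJ, fj⟩ | ⟨iK, fk⟩) := e
        · rw [Finset.sum_eq_zero (fun i _ => by
            rw [hrepr0 i mu _ (fun j hc => by exact Sum.inl_ne_inr hc), mul_zero])]
          obtain (j | j) := fj
          · exact hJx iJ j
          · exact hJy iJ j
        · obtain (j | j) := fk
          · rw [Finset.sum_eq_zero (fun i _ => by
              rw [hrepr0 i mu _ (fun j' hc => by
                obtain ⟨h1, h2⟩ := Sigma.mk.inj_iff.mp (Sum.inr.inj hc)
                subst h1
                exact Sum.inl_ne_inr (eq_of_heq h2)), mul_zero])]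
            exact hKx iK j
          · rw [hKy iK j]
            rw [Finset.sum_eq_single iK]
            · rw [hreprv iK mu j]
              ring
            · intro i _ hne
              rw [hrepr0 i mu _ (fun j' hc => by
                obtain ⟨h1, -⟩ := Sigma.mk.inj_iff.mp (Sum.inr.inj hc)
                exact hne h1.symm), mul_zero]
            · simp
      rw [hxeq]
      apply Submodule.sum_smul_mem
      intro i _
      exact Submodule.subset_span ⟨i, rfl⟩
    · rw [Submodule.span_le]
      rintro _ ⟨i, rfl⟩
      exact hvker i mu
  have hkerdim_eq : ∀ mu ∉ S, finrank ℂ (LinearMap.ker (A + mu • B)) = kK := by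
    intro mu hmu
    rw [hker_eq_span mu hmu, finrank_span_eq_card (hindep mu), Fintype.card_fin]
  -- extra kernel vector at singular values
  have hkerdim_S : ∀ i₀ : Fin kJ, kK + 1 ≤ finrank ℂ (LinearMap.ker (A + (-eig i₀) • B)) := by
    intro i₀
    set mu : ℂ := -eig i₀ with hmu
    set u : V := b (Sum.inl ⟨i₀, Sum.inl ⟨jsz i₀ - 1, by have := hjsz i₀; omega⟩⟩) with hu
    have huker : u ∈ LinearMap.ker (A + mu • B) := by
      apply hmemker
      intro f
      rw [hu, happly]
      obtain (⟨i', fj⟩ | ⟨i', fk⟩) := f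
      · obtain (j' | j') := fj
        · unfold JK.pencilMat
          by_cases hi : i₀ = i'
          · subst hi
            simp [Matrix.blockDiagonal'_apply_eq]
          · rw [Matrix.fromBlocks_apply₁₁, Matrix.blockDiagonal'_apply_ne _ _ _ hi]
        · unfold JK.pencilMat
          by_cases hi : i₀ = i'
          · subst hi
            rw [Matrix.fromBlocks_apply₁₁, Matrix.blockDiagonal'_apply_eq,
              Matrix.fromBlocks_apply₁₂]
            unfold jordanUpper
            have h1 : eig i₀ + mu = 0 := by rw [hmu]; ring
            rw [h1]
            have hjlt := j'.isLt
            simp only [Fin.val_mk]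
            split_ifs with h2 h3
            · rfl
            · exfalso; omega
            · rfl
          · rw [Matrix.fromBlocks_apply₁₁, Matrix.blockDiagonal'_apply_ne _ _ _ hi]
      · unfold JK.pencilMat
        simp
    -- independent family of size kK + 1 inside the kernel
    set w' : Fin kK ⊕ Unit → V := Sum.elim (fun i => v i mu) (fun _ => u) with hw'
    have hw'ker : ∀ s, w' s ∈ LinearMap.ker (A + mu • B) := by
      intro s
      obtain (i | _) := s
      · exact hvker i mu
      · exact huker
    have hw'indep : LinearIndependent ℂ w' := by
      apply JK.indep_of_single w'
        (LinearMap.pi (fun s : Fin kK ⊕ Unit =>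
          Finsupp.lapply (Sum.elim
            (fun i : Fin kK =>
              (Sum.inr ⟨i, Sum.inr ⟨ksz i - 1, by have := hksz i; omega⟩⟩ :
                ((i : Fin kJ) × (Fin (jsz i) ⊕ Fin (jsz i))) ⊕
                ((i : Fin kK) × (Fin (ksz i - 1) ⊕ Fin (ksz i)))))
            (fun _ : Unit => Sum.inl ⟨i₀, Sum.inl ⟨jsz i₀ - 1, by have := hjsz i₀; omega⟩⟩) s) ∘ₗ
            (b.repr : V ≃ₗ[ℂ] _).toLinearMap))
      intro s
      funext s'
      simp only [LinearMap.pi_apply, LinearMap.coe_comp, Function.comp_apply,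
        Finsupp.lapply_apply, LinearEquiv.coe_coe]
      obtain (i | _) := s
      · obtain (i' | _) := s'
        · simp only [Sum.elim_inl, hw']
          by_cases hi : i' = i
          · subst hi
            rw [hreprv i' mu ⟨ksz i' - 1, by have := hksz i'; omega⟩]
            simp
          · rw [hrepr0 i mu _ (by
              intro j hc
              apply hi
              obtain ⟨h1, -⟩ := Sigma.mk.inj_iff.mp (Sum.inr.inj hc)
              exact h1)]
            rw [Pi.single_eq_of_ne (by simp [hi])]
        · simp only [Sum.elim_inr, Sum.elim_inl, hw']
          rw [hrepr0 i mu _ (fun j hc => Sum.inl_ne_inr hc)]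
          rw [Pi.single_eq_of_ne (by simp)]
      · obtain (i' | u') := s'
        · simp only [Sum.elim_inr, Sum.elim_inl, hw', hu, Basis.repr_self]
          rw [Finsupp.single_apply, if_neg (fun hc => Sum.inl_ne_inr hc)]
          rw [Pi.single_eq_of_ne (by simp)]
        · simp only [Sum.elim_inr, hw', hu, Basis.repr_self]
          rw [Finsupp.single_apply, if_pos rfl]
          simp
    have hsp : Submodule.span ℂ (Set.range w') ≤ LinearMap.ker (A + mu • B) := by
      rw [Submodule.span_le]
      rintro _ ⟨s, rfl⟩
      exact hw'ker s
    have hfr : finrank ℂ (Submodule.span ℂ (Set.range w')) = kK + 1 := by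
      rw [finrank_span_eq_card hw'indep]
      simp
    rw [← hfr]
    exact Submodule.finrank_mono hsp
  -- rank-nullity
  have hrn : ∀ mu : ℂ, formRank (A + mu • B) + finrank ℂ (LinearMap.ker (A + mu • B))
      = finrank ℂ V := fun mu => LinearMap.finrank_range_add_finrank_ker _
  have hExistsNotS : ∃ nu : ℂ, nu ∉ S := hSfin.infinite_compl.nonempty
  -- regular values are exactly the complement of S
  have hreg : ∀ mu : ℂ, IsRegularValue A B mu ↔ mu ∉ S := by
    intro mu
    constructor
    · intro hregmu hmuS
      obtain ⟨i₀, hi₀⟩ := hmuS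
      obtain ⟨nu, hnu⟩ := hExistsNotS
      have h1 : formRank (A + nu • B) ≤ formRank (A + mu • B) := hregmu nu
      have h2 := hrn nu
      have h3 := hrn mu
      have h4 := hkerdim_eq nu hnu
      have h5 := hkerdim_S i₀
      have hi₀' : -eig i₀ = mu := hi₀
      rw [hi₀'] at h5
      omega
    · intro hmuS nu
      have h1 := hrn nu
      have h2 := hrn mu
      have h3 := hkerdim_eq mu hmuS
      have h4 := hkerdim_lb nu
      omega
  -- the core subspace
  set W : Submodule ℂ V := Submodule.span ℂ
    (Set.range fun p : (i : Fin kK) × Fin (ksz i) => b (Sum.inr ⟨p.1, Sum.inr p.2⟩)) with hW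
  have hWcore : coreSubspace A B = W := by
    apply le_antisymm
    · unfold coreSubspace
      apply iSup_le
      intro mu
      apply iSup_le
      intro hregmu
      have hmuS := (hreg mu).mp hregmu
      rw [hker_eq_span mu hmuS, Submodule.span_le]
      rintro _ ⟨i, rfl⟩
      rw [hv]
      apply Submodule.sum_smul_mem
      intro j _
      exact Submodule.subset_span ⟨⟨i, j⟩, rfl⟩
    · rw [hW, Submodule.span_le]
      rintro _ ⟨⟨i, j⟩, rfl⟩
      set L : (Fin (ksz i) → ℂ) →ₗ[ℂ] V :=
        Fintype.linearCombination ℂ (fun j' : Fin (ksz i) => b (Sum.inr ⟨i, Sum.inr j'⟩))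
        with hL
      have hLsingle : L (Pi.single j 1) = b (Sum.inr ⟨i, Sum.inr j⟩) := by
        rw [hL, Fintype.linearCombination_apply]
        rw [Finset.sum_eq_single j]
        · simp
        · intro j' _ hne
          rw [Pi.single_eq_of_ne hne, zero_smul]
        · simp
      have htop := JK.span_w_top (ksz i) S hSfin
      have hmem := Submodule.eq_top_iff'.mp htop (Pi.single j 1 : Fin (ksz i) → ℂ)
      have hmap := Submodule.mem_map_of_mem (f := L) hmem
      rw [Submodule.map_span] at hmap
      show b (Sum.inr ⟨i, Sum.inr j⟩) ∈ coreSubspace A B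
      rw [← hLsingle]
      refine Submodule.span_le.mpr ?_ hmap
      rintro _ ⟨y, ⟨mu, hmuS, rfl⟩, rfl⟩
      have hLw : L (fun j' : Fin (ksz i) => (-mu) ^ (ksz i - 1 - (j' : ℕ))) = v i mu := by
        rw [hL, Fintype.linearCombination_apply, hv]
      rw [hLw]
      exact Submodule.mem_iSup_of_mem mu
        (Submodule.mem_iSup_of_mem ((hreg mu).mpr hmuS) (hvker i mu))
  -- dimension of W
  have hWdim : finrank ℂ W = ∑ i, ksz i := by
    rw [hW]
    have hinj : Function.Injective
        (fun p : (i : Fin kK) × Fin (ksz i) =>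
          (Sum.inr ⟨p.1, Sum.inr p.2⟩ :
            ((i : Fin kJ) × (Fin (jsz i) ⊕ Fin (jsz i))) ⊕
            ((i : Fin kK) × (Fin (ksz i - 1) ⊕ Fin (ksz i))))) := by
      rintro ⟨p1, p2⟩ ⟨q1, q2⟩ hpq
      obtain ⟨h1, h2⟩ := Sigma.mk.inj_iff.mp (Sum.inr.inj hpq)
      subst h1
      simp only [heq_eq_eq, Sum.inr.injEq] at h2
      subst h2
      rfl
    have hind : LinearIndependent ℂ
        (fun p : (i : Fin kK) × Fin (ksz i) => b (Sum.inr ⟨p.1, Sum.inr p.2⟩)) :=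
      b.linearIndependent.comp _ hinj
    rw [finrank_span_eq_card hind]
    simp
  -- dimension of V
  have hdimV : finrank ℂ V = (∑ i, (jsz i + jsz i)) + (∑ i, ((ksz i - 1) + ksz i)) := by
    rw [finrank_eq_card_basis b]
    simp
  -- final arithmetic
  rw [hWcore, hWdim, hdimV]
  have c1 : ((∑ i, ksz i : ℕ) : ℤ) = ∑ i, (ksz i : ℤ) := by push_cast; rfl
  have c2 : ((∑ i, (jsz i + jsz i) : ℕ) : ℤ) = 2 * ∑ i, (jsz i : ℤ) := by
    push_cast
    rw [Finset.sum_add_distrib]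
    ring
  have c3 : ((∑ i, ((ksz i - 1) + ksz i) : ℕ) : ℤ) = 2 * (∑ i, (ksz i : ℤ)) - kK := by
    rw [Nat.cast_sum]
    rw [Finset.sum_congr rfl (fun i _ => (show (((ksz i - 1) + ksz i : ℕ) : ℤ)
      = 2 * (ksz i : ℤ) - 1 by have := hksz i; omega))]
    rw [Finset.sum_sub_distrib, ← Finset.mul_sum]
    simp [Finset.card_univ, mul_comm]
  have c4 : ∑ i : Fin kK, ((ksz i : ℤ) - 1) = (∑ i, (ksz i : ℤ)) - kK := by
    rw [Finset.sum_sub_distrib]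
    simp
  rw [Nat.cast_add, c1, c2, c3, c4]
  ring
end
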